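/- Let K be the fraction field of the polynomial ring over ℚ in a family of variables indexed by a set of cardinality 𝔠 (the rational function field ℚ(tᵢ | i < 𝔠)). Then there is a family of 2^𝔠 orderings on K, each making K an archimedean ordered field, which are pairwise non-isomorphic: for any two distinct orderings <₁ and <₂ in the family, there is no ring isomorphism f : K → K that is order-preserving from (K, <₁) to (K, <₂). -/

import Mathlib

open Cardinal

/-- A relation `r` (strict ordering) on a field `K` is a field ordering if it is a strict
total order compatible with the field structure: addition preserves it, and products of
positive elements are positive (i.e. it makes `K` a linearly ordered field). -/
def IsFieldOrdering {K : Type*} [Field K] (r : K → K → Prop) : Prop :=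
  IsStrictTotalOrder K r ∧ (∀ a b c : K, r a b → r (a + c) (b + c)) ∧
    (∀ a b : K, r 0 a → r 0 b → r 0 (a * b))

/-- An ordering `r` on a field `K` is archimedean if every element is below some natural
number. -/
def IsArchimedeanOrdering {K : Type*} [Field K] (r : K → K → Prop) : Prop :=
  ∀ x : K, ∃ n : ℕ, r x (n : K)

/-- The ordering pulled back from `ℝ` along an injective ring hom is a field ordering. -/
lemma isFieldOrdering_pullback {K : Type*} [Field K] (φ : K →+* ℝ) :
    IsFieldOrdering (fun a b : K => φ a < φ b) := by
  refine ⟨?_, ?_, ?_⟩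
  · exact {
      trichotomous := fun a b => by
        rcases lt_trichotomy (φ a) (φ b) with h | h | h
        · exact fun h' _ => absurd h h'
        · exact fun _ _ => φ.injective h
        · exact fun _ h' => absurd h h'
      irrefl := fun a => lt_irrefl _
      trans := fun a b c hab hbc => lt_trans hab hbc }
  · intro a b c h
    simpa only [map_add] using add_lt_add_of_lt_of_le h (le_refl (φ c))
  · intro a b ha hb
    rw [map_zero] at ha hb ⊢
    rw [map_mul]
    exact mul_pos ha hb

/-- Two ring homs from a field into `ℝ` inducing the same pulled-back ordering are equal. -/
lemma ringHom_to_real_ext {K : Type*} [Field K] (φ ψ : K →+* ℝ)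
    (h : ∀ a b, φ a < φ b ↔ ψ a < ψ b) : φ = ψ := by
  ext a
  by_contra hne
  rcases lt_or_gt_of_ne hne with hlt | hlt
  · obtain ⟨q, hq1, hq2⟩ := exists_rat_btwn hlt
    have h1 : φ ((q : ℚ) : K) < φ a := by
      rw [(h _ _)]
      rw [map_ratCast]
      exact hq2
    rw [map_ratCast] at h1
    exact absurd h1 (not_lt.2 hq1.le)
  · obtain ⟨q, hq1, hq2⟩ := exists_rat_btwn hlt
    have h1 : φ a < φ ((q : ℚ) : K) := by
      rw [(h _ _)]
      rw [map_ratCast]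
      exact hq1
    rw [map_ratCast] at h1
    exact absurd h1 (not_lt.2 hq2.le)

theorem exists_two_pow_continuum_archimedean_orderings
    (ι : Type) (hι : #ι = Cardinal.continuum) :
    ∃ (J : Type) (R : J → (FractionRing (MvPolynomial ι ℚ) →
        FractionRing (MvPolynomial ι ℚ) → Prop)),
      #J = 2 ^ Cardinal.continuum ∧
      (∀ j, IsFieldOrdering (R j) ∧ IsArchimedeanOrdering (R j)) ∧
      (∀ j j' : J, j ≠ j' →
        ¬ ∃ f : FractionRing (MvPolynomial ι ℚ) ≃+* FractionRing (MvPolynomial ι ℚ),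
          ∀ a b, R j a b ↔ R j' (f a) (f b)) := by
  classical
  -- a transcendence basis of ℝ over ℚ
  obtain ⟨s, hs⟩ := exists_isTranscendenceBasis ℚ ℝ
  haveI hne : Nonempty s := by
    by_contra h
    rw [not_nonempty_iff] at h
    have halg : Algebra.IsAlgebraic ℚ ℝ := hs.isEmpty_iff_isAlgebraic.mp h
    have hle := Algebra.IsAlgebraic.cardinalMk_le_max ℚ ℝ
    rw [Cardinal.mk_real, Cardinal.mkRat, max_self] at hle
    exact absurd hle (not_le.2 Cardinal.aleph0_lt_continuum)
  have hcard : #s = Cardinal.continuum := by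
    have h1 := hs.lift_cardinalMk_eq_max_lift
    rw [Cardinal.lift_id, Cardinal.lift_id, Cardinal.lift_id, Cardinal.mk_real,
      Cardinal.mkRat] at h1
    rw [sup_comm ℵ₀ (#s), sup_assoc, sup_idem] at h1
    rcases le_total (#s) ℵ₀ with hle | hle
    · exfalso
      rw [sup_eq_right.2 hle] at h1
      exact absurd h1.symm (ne_of_lt Cardinal.aleph0_lt_continuum)
    · rw [sup_eq_left.2 hle] at h1
      exact h1.symm
  have hsum : #(ι ⊕ ι) = #s := by
    rw [Cardinal.mk_sum, Cardinal.lift_id, hι, hcard,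
      Cardinal.add_eq_self Cardinal.aleph0_le_continuum]

  obtain ⟨e0⟩ := Cardinal.eq.1 hsum
  set T : ι ⊕ ι → ℝ := fun p => (e0 p : ℝ) with hT_def
  have hT : AlgebraicIndependent ℚ T := hs.1.comp e0 e0.injective
  have hTinj : Function.Injective T :=
    Subtype.val_injective.comp e0.injective
  -- for each subset S of ι, an equiv ι ≃ S ⊕ ι
  have hScard : ∀ S : Set ι, #ι = #(↥S ⊕ ι) := by
    intro S
    rw [Cardinal.mk_sum, Cardinal.lift_id, Cardinal.lift_id, hι]
    have h1 : #↥S ≤ Cardinal.continuum := hι ▸ Cardinal.mk_set_le S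
    refine le_antisymm le_add_self ?_
    calc #↥S + Cardinal.continuum ≤ Cardinal.continuum + Cardinal.continuum :=
          add_le_add h1 le_rfl
      _ = Cardinal.continuum := Cardinal.add_eq_self Cardinal.aleph0_le_continuum
  let e : ∀ S : Set ι, ι ≃ (↥S ⊕ ι) := fun S => Classical.choice (Cardinal.eq.1 (hScard S))
  let m : ∀ S : Set ι, ι → ι ⊕ ι := fun S j => Sum.map Subtype.val id ((e S) j)
  have hm_inj : ∀ S, Function.Injective (m S) := fun S =>
    (Subtype.val_injective.sumMap (fun a b h => h)).comp (e S).injective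
  let v : ∀ S : Set ι, ι → ℝ := fun S => T ∘ m S
  have hv : ∀ S, AlgebraicIndependent ℚ (v S) := fun S => hT.comp (m S) (hm_inj S)
  have hv_inj : ∀ S, Function.Injective
      ((MvPolynomial.aeval (v S) : MvPolynomial ι ℚ →ₐ[ℚ] ℝ) : MvPolynomial ι ℚ →+* ℝ) :=
    fun S => (algebraicIndependent_iff_injective_aeval.mp (hv S))
  let Φ : ∀ S : Set ι, FractionRing (MvPolynomial ι ℚ) →+* ℝ :=
    fun S => IsFractionRing.lift (hv_inj S)
  -- key invariant: which T (inl i) lie in the range of Φ S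
  have hmem : ∀ (S : Set ι) (i : ι), T (Sum.inl i) ∈ Set.range (Φ S) ↔ i ∈ S := by
    intro S i
    constructor
    · rintro ⟨z, hz⟩
      by_contra hi
      -- the extended family is still algebraically independent
      have hinjo : Function.Injective
          (fun o : Option ι => (Option.elim o (Sum.inl i) (m S) : ι ⊕ ι)) := by
        rintro (_ | a) (_ | b) h
        · rfl
        · exfalso
          have h2 : Sum.inl i = Sum.map Subtype.val id ((e S) b) := h
          rcases h' : (e S) b with c | c
          · rw [h', Sum.map_inl] at h2
            have : i ∈ S := by
              have := Sum.inl.inj h2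
              rw [this]; exact c.2
            exact hi this
          · rw [h', Sum.map_inr] at h2
            exact Sum.inl_ne_inr h2
        · exfalso
          have h2 : Sum.inl i = Sum.map Subtype.val id ((e S) a) := h.symm
          rcases h' : (e S) a with c | c
          · rw [h', Sum.map_inl] at h2
            have : i ∈ S := by
              have := Sum.inl.inj h2
              rw [this]; exact c.2
            exact hi this
          · rw [h', Sum.map_inr] at h2
            exact Sum.inl_ne_inr h2
        · have h2 : m S a = m S b := h
          rw [hm_inj S h2]
      have hopt : AlgebraicIndependent ℚ
          (fun o : Option ι => Option.elim o (T (Sum.inl i)) (v S)) := by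
        have h2 := hT.comp _ hinjo
        convert h2 using 1
        funext o
        cases o <;> rfl
      have htrans : Transcendental (Algebra.adjoin ℚ (Set.range (v S))) (T (Sum.inl i)) :=
        ((hv S).option_iff_transcendental (T (Sum.inl i))).mp hopt
      apply htrans
      obtain ⟨p, q, hq, hz'⟩ := IsFractionRing.div_surjective (A := MvPolynomial ι ℚ) z
      have hq0 : q ≠ 0 := nonZeroDivisors.ne_zero hq
      have haq : (MvPolynomial.aeval (v S)) q ≠ 0 := by
        intro h
        apply hq0
        apply hv_inj S
        rw [map_zero]
        exact h
      -- the relation x * aeval q = aeval p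
      have hx : T (Sum.inl i) * (MvPolynomial.aeval (v S)) q = (MvPolynomial.aeval (v S)) p := by
        rw [← hz, ← hz', map_div₀, IsFractionRing.lift_algebraMap, IsFractionRing.lift_algebraMap]
        field_simp
        exact mul_div_cancel_right₀ _ haq
      -- build the annihilating polynomial over the adjoin
      have hpmem : (MvPolynomial.aeval (v S)) p ∈ Algebra.adjoin ℚ (Set.range (v S)) := by
        rw [Algebra.adjoin_range_eq_range_aeval]; exact ⟨p, rfl⟩
      have hqmem : (MvPolynomial.aeval (v S)) q ∈ Algebra.adjoin ℚ (Set.range (v S)) := by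
        rw [Algebra.adjoin_range_eq_range_aeval]; exact ⟨q, rfl⟩
      set qa : Algebra.adjoin ℚ (Set.range (v S)) := ⟨_, hqmem⟩ with hqa
      set pa : Algebra.adjoin ℚ (Set.range (v S)) := ⟨_, hpmem⟩ with hpa
      refine ⟨Polynomial.C qa * Polynomial.X - Polynomial.C pa, ?_, ?_⟩
      · intro h
        have hcoeff := congrArg (fun r => Polynomial.coeff r 1) h
        simp only [Polynomial.coeff_sub, Polynomial.coeff_C_mul, Polynomial.coeff_X_one,
          mul_one, Polynomial.coeff_C, Polynomial.coeff_zero] at hcoeff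
        norm_num at hcoeff
        exact haq (congrArg Subtype.val hcoeff)
      · rw [Polynomial.aeval_def]
        simp only [Polynomial.eval₂_sub, Polynomial.eval₂_mul, Polynomial.eval₂_C,
          Polynomial.eval₂_X]
        have hqval : (algebraMap (Algebra.adjoin ℚ (Set.range (v S))) ℝ) qa
            = (MvPolynomial.aeval (v S)) q := rfl
        have hpval : (algebraMap (Algebra.adjoin ℚ (Set.range (v S))) ℝ) pa
            = (MvPolynomial.aeval (v S)) p := rfl
        rw [hqval, hpval, mul_comm, hx, sub_self]
    · intro hi
      refine ⟨algebraMap (MvPolynomial ι ℚ) _ (MvPolynomial.X ((e S).symm (Sum.inl ⟨i, hi⟩))), ?_⟩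
      rw [IsFractionRing.lift_algebraMap]
      show (MvPolynomial.aeval (v S)) (MvPolynomial.X _) = _
      rw [MvPolynomial.aeval_X]
      show T (Sum.map Subtype.val id ((e S) ((e S).symm (Sum.inl ⟨i, hi⟩)))) = _
      rw [Equiv.apply_symm_apply, Sum.map_inl]
  -- assemble
  refine ⟨Set ι, fun S a b => Φ S a < Φ S b, ?_, ?_, ?_⟩
  · rw [Cardinal.mk_set, hι]
  · intro S
    refine ⟨isFieldOrdering_pullback (Φ S), fun x => ?_⟩
    obtain ⟨n, hn⟩ := exists_nat_gt (Φ S x)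
    refine ⟨n, ?_⟩
    show Φ S x < Φ S ((n : ℕ) : FractionRing (MvPolynomial ι ℚ))
    rwa [map_natCast]
  · rintro S S' hne ⟨f, hf⟩
    have hφψ : (Φ S').comp (f : FractionRing (MvPolynomial ι ℚ) →+*
        FractionRing (MvPolynomial ι ℚ)) = Φ S := by
      apply ringHom_to_real_ext
      intro a b
      simpa using (hf a b).symm
    have hrange : Set.range (Φ S) = Set.range (Φ S') := by
      rw [← hφψ, RingHom.coe_comp, Set.range_comp]
      have hru : Set.range ⇑((f : FractionRing (MvPolynomial ι ℚ) →+*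
          FractionRing (MvPolynomial ι ℚ))) = Set.univ :=
        Function.Surjective.range_eq (EquivLike.surjective f)
      rw [hru, Set.image_univ]
    obtain ⟨i, hi⟩ : ∃ i, (i ∈ S ∧ i ∉ S') ∨ (i ∈ S' ∧ i ∉ S) := by
      by_contra h
      push_neg at h
      apply hne
      ext i
      have := h i
      tauto
    rcases hi with ⟨h1, h2⟩ | ⟨h1, h2⟩
    · exact h2 ((hmem S' i).mp (hrange ▸ (hmem S i).mpr h1))
    · exact h2 ((hmem S i).mp (hrange.symm ▸ (hmem S' i).mpr h1))
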